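/- Let H be a finite simple graph and let v, w be two distinct false twins of H (N(v) = N(w)). Then every biclique of H containing w also contains v, the map B ↦ B ∖ {w} is a bijection from the bicliques of H onto the bicliques of H − {w}, and KB(H − {w}) is isomorphic to KB(H). -/

import Mathlib

open SimpleGraph

variable {V : Type}

/-- `B1`, `B2` are the two (nonempty) parts of an induced complete bipartite subgraph:
they are disjoint, each part is independent, and all edges between the parts are present. -/
def IsCBP (H : SimpleGraph V) (B1 B2 : Set V) : Prop :=
  B1.Nonempty ∧ B2.Nonempty ∧ Disjoint B1 B2 ∧
    (∀ a ∈ B1, ∀ b ∈ B1, ¬H.Adj a b) ∧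
    (∀ a ∈ B2, ∀ b ∈ B2, ¬H.Adj a b) ∧
    (∀ a ∈ B1, ∀ b ∈ B2, H.Adj a b)

/-- A set of vertices inducing a complete bipartite subgraph `K_{m,n}`, `m, n ≥ 1`. -/
def IsCompleteBipartiteSet (H : SimpleGraph V) (S : Set V) : Prop :=
  ∃ B1 B2 : Set V, IsCBP H B1 B2 ∧ B1 ∪ B2 = S

/-- A biclique: a maximal set of vertices inducing a complete bipartite subgraph. -/
def IsBiclique (H : SimpleGraph V) (S : Set V) : Prop :=
  IsCompleteBipartiteSet H S ∧
    ∀ T : Set V, IsCompleteBipartiteSet H T → S ⊆ T → S = T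

/-- The biclique graph `KB(H)`: the intersection graph of the bicliques of `H`. -/
def KB (H : SimpleGraph V) : SimpleGraph {S : Set V // IsBiclique H S} :=
  SimpleGraph.fromRel fun A B => (A.1 ∩ B.1).Nonempty

section Aux

variable {H : SimpleGraph V}

lemma IsCBP.symm' {B1 B2 : Set V} (h : IsCBP H B1 B2) : IsCBP H B2 B1 := by
  obtain ⟨h1, h2, hd, hi1, hi2, he⟩ := h
  exact ⟨h2, h1, hd.symm, hi2, hi1, fun a ha b hb => (he b hb a ha).symm⟩

lemma cbp_locate {B1 B2 : Set V} (h : IsCBP H B1 B2) {x : V} (hx : x ∈ B1 ∪ B2) :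
    ∃ C1 C2, IsCBP H C1 C2 ∧ C1 ∪ C2 = B1 ∪ B2 ∧ x ∈ C1 := by
  rcases hx with hx | hx
  · exact ⟨B1, B2, h, rfl, hx⟩
  · exact ⟨B2, B1, h.symm', Set.union_comm _ _, hx⟩

/-- If `x, y` have the same neighborhoods and `x` lies in the first part of a CBP with
`y` outside, then `y` can be inserted into the first part. -/
lemma cbp_insert_twin {x y : V} (hA : ∀ a, H.Adj a x ↔ H.Adj a y)
    {B1 B2 : Set V} (h : IsCBP H B1 B2) (hx : x ∈ B1) (hy1 : y ∉ B1) :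
    IsCBP H (insert y B1) B2 := by
  obtain ⟨h1, h2, hd, hi1, hi2, he⟩ := h
  have hy2 : y ∉ B2 := fun hy => H.irrefl ((hA x).mpr (he x hx y hy))
  refine ⟨⟨y, Set.mem_insert _ _⟩, h2, Set.disjoint_left.mpr (by
      rintro a (rfl | ha) hb
      exacts [hy2 hb, Set.disjoint_left.mp hd ha hb]), ?_, hi2, ?_⟩
  · rintro a (rfl | ha) b (rfl | hb)
    · exact H.irrefl
    · intro hadj
      exact hi1 b hb x hx ((hA b).mpr hadj.symm)
    · intro hadj
      exact hi1 a ha x hx ((hA a).mpr hadj)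
    · exact hi1 a ha b hb
  · rintro a (rfl | ha) b hb
    · exact ((hA b).mp (he x hx b hb).symm).symm
    · exact he a ha b hb

lemma cbps_insert_twin {x y : V} (hA : ∀ a, H.Adj a x ↔ H.Adj a y)
    {S : Set V} (h : IsCompleteBipartiteSet H S) (hx : x ∈ S) (hy : y ∉ S) :
    IsCompleteBipartiteSet H (insert y S) := by
  obtain ⟨B1, B2, hc, hu⟩ := h
  subst hu
  obtain ⟨C1, C2, hc', hu', hxC⟩ := cbp_locate hc hx
  have hy1 : y ∉ C1 := fun hyC => hy (hu' ▸ Set.mem_union_left _ hyC)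
  exact ⟨insert y C1, C2, cbp_insert_twin hA hc' hxC hy1,
    by rw [Set.insert_union, hu']⟩

/-- Every biclique containing a vertex contains all of its false twins. -/
lemma twin_mem_biclique {x y : V} (hA : ∀ a, H.Adj a x ↔ H.Adj a y)
    {B : Set V} (hB : IsBiclique H B) (hx : x ∈ B) : y ∈ B := by
  by_cases hy : y ∈ B
  · exact hy
  · have h := cbps_insert_twin hA hB.1 hx hy
    have := hB.2 _ h (Set.subset_insert _ _)
    rw [this]
    exact Set.mem_insert _ _

/-- Every complete bipartite set extends to a biclique (finiteness). -/
lemma exists_biclique_ext [Fintype V] {S : Set V} (hS : IsCompleteBipartiteSet H S) :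
    ∃ B, IsBiclique H B ∧ S ⊆ B := by
  obtain ⟨B, hB, hmax⟩ := Set.Finite.exists_maximalFor id
    {T : Set V | IsCompleteBipartiteSet H T ∧ S ⊆ T} (Set.toFinite _) ⟨S, hS, le_rfl⟩
  exact ⟨B, ⟨hB.1, fun T hT hBT => le_antisymm hBT (hmax ⟨hT, hB.2.trans hBT⟩ hBT)⟩, hB.2⟩

lemma cbp_image {s : Set V} {T1 T2 : Set s} (h : IsCBP (H.induce s) T1 T2) :
    IsCBP H (Subtype.val '' T1) (Subtype.val '' T2) := by
  obtain ⟨h1, h2, hd, hi1, hi2, he⟩ := h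
  refine ⟨h1.image _, h2.image _, ?_, ?_, ?_, ?_⟩
  · rw [Set.disjoint_left]
    rintro _ ⟨a, ha, rfl⟩ ⟨b, hb, hab⟩
    exact Set.disjoint_left.mp hd ha (Subtype.val_injective hab ▸ hb)
  · rintro _ ⟨a, ha, rfl⟩ _ ⟨b, hb, rfl⟩
    exact hi1 a ha b hb
  · rintro _ ⟨a, ha, rfl⟩ _ ⟨b, hb, rfl⟩
    exact hi2 a ha b hb
  · rintro _ ⟨a, ha, rfl⟩ _ ⟨b, hb, rfl⟩
    exact he a ha b hb

lemma cbp_preimage {s : Set V} {B1 B2 : Set V} (h : IsCBP H B1 B2)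
    (h1 : B1 ⊆ s) (h2 : B2 ⊆ s) :
    IsCBP (H.induce s) (Subtype.val ⁻¹' B1) (Subtype.val ⁻¹' B2) := by
  obtain ⟨⟨x1, hx1⟩, ⟨x2, hx2⟩, hd, hi1, hi2, he⟩ := h
  refine ⟨⟨⟨x1, h1 hx1⟩, hx1⟩, ⟨⟨x2, h2 hx2⟩, hx2⟩, hd.preimage _, ?_, ?_, ?_⟩
  · intro a ha b hb
    exact hi1 a.1 ha b.1 hb
  · intro a ha b hb
    exact hi2 a.1 ha b.1 hb
  · intro a ha b hb
    exact he a.1 ha b.1 hb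

lemma cbps_image {s : Set V} {T : Set s} (h : IsCompleteBipartiteSet (H.induce s) T) :
    IsCompleteBipartiteSet H (Subtype.val '' T) := by
  obtain ⟨T1, T2, hc, hu⟩ := h
  exact ⟨_, _, cbp_image hc, by rw [← Set.image_union, hu]⟩

lemma cbps_of_image {s : Set V} {T : Set s}
    (h : IsCompleteBipartiteSet H (Subtype.val '' T)) :
    IsCompleteBipartiteSet (H.induce s) T := by
  obtain ⟨B1, B2, hc, hu⟩ := h
  have hsub : Subtype.val '' T ⊆ s := by
    rintro _ ⟨a, _, rfl⟩; exact a.2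
  have h1 : B1 ⊆ s := (hu ▸ Set.subset_union_left).trans hsub
  have h2 : B2 ⊆ s := (hu ▸ Set.subset_union_right).trans hsub
  refine ⟨_, _, cbp_preimage hc h1 h2, ?_⟩
  rw [← Set.preimage_union, hu, Set.preimage_image_eq _ Subtype.val_injective]

end Aux

section Twin

variable {H : SimpleGraph V} {v w : V}

lemma preimage_insert_w {X : Set V} :
    (Subtype.val ⁻¹' (insert w X) : Set ({w}ᶜ : Set V)) = Subtype.val ⁻¹' X := by
  ext a
  have : a.1 ≠ w := a.2
  simp [Set.mem_preimage, this]

lemma image_preimage_w {B : Set V} :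
    (Subtype.val '' (Subtype.val ⁻¹' B : Set ({w}ᶜ : Set V))) = B \ {w} := by
  rw [Subtype.image_preimage_coe, Set.diff_eq, Set.inter_comm]

/-- The preimage of a biclique of `H` is a biclique of `H - {w}`. -/
lemma biclique_preimage (hvw : v ≠ w) (hA : ∀ a, H.Adj a v ↔ H.Adj a w)
    {B : Set V} (hB : IsBiclique H B) :
    IsBiclique (H.induce ({w}ᶜ : Set V)) (Subtype.val ⁻¹' B : Set ({w}ᶜ : Set V)) := by
  have hA' : ∀ a, H.Adj a w ↔ H.Adj a v := fun a => (hA a).symm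
  constructor
  · -- complete bipartite set
    apply cbps_of_image
    rw [image_preimage_w]
    by_cases hw : w ∈ B
    · have hv : v ∈ B := twin_mem_biclique hA' hB hw
      obtain ⟨B1, B2, hc, hu⟩ := hB.1
      obtain ⟨C1, C2, hc', hu', hwC⟩ := cbp_locate hc (hu ▸ hw)
      rw [hu] at hu'
      obtain ⟨hn1, hn2, hd, hi1, hi2, he⟩ := hc'
      have hvC1 : v ∈ C1 := by
        have hvU : v ∈ C1 ∪ C2 := hu' ▸ hv
        rcases hvU with h | h
        · exact h
        · exact absurd ((hA w).mp (he w hwC v h)) H.irrefl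
      have hwC2 : w ∉ C2 := Set.disjoint_left.mp hd hwC
      refine ⟨C1 \ {w}, C2, ⟨⟨v, hvC1, hvw⟩, hn2, hd.mono_left Set.diff_subset, ?_, hi2, ?_⟩, ?_⟩
      · intro a ha b hb
        exact hi1 a ha.1 b hb.1
      · intro a ha b hb
        exact he a ha.1 b hb
      · rw [← Set.diff_singleton_eq_self hwC2, ← Set.union_diff_distrib, hu']
    · rw [Set.diff_singleton_eq_self hw]
      exact hB.1
  · -- maximality
    intro T hT hsub
    have hS : IsCompleteBipartiteSet H (Subtype.val '' T) := cbps_image hT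
    set S : Set V := Subtype.val '' T with hSdef
    have hBS : B \ {w} ⊆ S := by
      rw [← image_preimage_w]
      exact Set.image_mono hsub
    have hTS : T = (Subtype.val ⁻¹' S : Set ({w}ᶜ : Set V)) :=
      (Set.preimage_image_eq _ Subtype.val_injective).symm
    by_cases hw : w ∈ B
    · have hv : v ∈ B := twin_mem_biclique hA' hB hw
      have hvS : v ∈ S := hBS ⟨hv, hvw⟩
      obtain ⟨S1, S2, hc, hu⟩ := hS
      obtain ⟨C1, C2, hc', hu', hvC⟩ := cbp_locate hc (hu ▸ hvS)
      rw [hu] at hu'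
      have hwC1 : w ∉ C1 := by
        intro hwC
        have : w ∈ S := hu' ▸ Set.mem_union_left _ hwC
        obtain ⟨a, _, ha⟩ := this
        exact a.2 ha
      have hins : IsCompleteBipartiteSet H (insert w S) :=
        ⟨insert w C1, C2, cbp_insert_twin hA hc' hvC hwC1, by rw [Set.insert_union, hu']⟩
      have hBins : B ⊆ insert w S := by
        intro x hx
        by_cases hxw : x = w
        · exact hxw ▸ Set.mem_insert _ _
        · exact Set.mem_insert_of_mem _ (hBS ⟨hx, hxw⟩)
      have hBeq : B = insert w S := hB.2 _ hins hBins
      rw [hTS, hBeq, preimage_insert_w]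
    · have hBsub : B ⊆ S := by
        rw [← Set.diff_singleton_eq_self hw]; exact hBS
      have hBeq : B = S := hB.2 _ hS hBsub
      rw [hTS, hBeq]

lemma biclique_preimage_inj {B B' : Set V}
    (hB : IsBiclique H B) (hB' : IsBiclique H B')
    (h : (Subtype.val ⁻¹' B : Set ({w}ᶜ : Set V)) = Subtype.val ⁻¹' B') : B = B' := by
  have him : B \ {w} = B' \ {w} := by
    rw [← image_preimage_w (B := B), ← image_preimage_w (B := B'), h]
  by_cases hw : w ∈ B <;> by_cases hw' : w ∈ B'
  · rw [← Set.insert_eq_self.mpr hw, ← Set.insert_diff_singleton, him,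
      Set.insert_diff_singleton, Set.insert_eq_self.mpr hw']
  · exfalso
    have h1 : B' ⊆ B := by
      rw [← Set.diff_singleton_eq_self hw', ← him]
      exact Set.diff_subset
    exact hw' ((hB'.2 _ hB.1 h1) ▸ hw)
  · exfalso
    have h1 : B ⊆ B' := by
      rw [← Set.diff_singleton_eq_self hw, him]
      exact Set.diff_subset
    exact hw ((hB.2 _ hB'.1 h1) ▸ hw')
  · rw [← Set.diff_singleton_eq_self hw, him, Set.diff_singleton_eq_self hw']

lemma biclique_preimage_surj [Fintype V] (hvw : v ≠ w) (hA : ∀ a, H.Adj a v ↔ H.Adj a w)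
    {T : Set ({w}ᶜ : Set V)} (hT : IsBiclique (H.induce ({w}ᶜ : Set V)) T) :
    ∃ B, IsBiclique H B ∧ (Subtype.val ⁻¹' B : Set ({w}ᶜ : Set V)) = T := by
  obtain ⟨B, hB, hsub⟩ := exists_biclique_ext (cbps_image hT.1)
  refine ⟨B, hB, ?_⟩
  have h1 : T ⊆ Subtype.val ⁻¹' B := fun a ha => hsub ⟨a, ha, rfl⟩
  exact (hT.2 _ (biclique_preimage hvw hA hB).1 h1).symm

end Twin

/-- If `v, w` are false twins, every biclique containing `w` contains `v`, the map
`B ↦ B \ {w}` is a bijection from the bicliques of `H` onto the bicliques of `H - {w}`,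
and `KB(H - {w}) ≅ KB(H)`. -/
theorem stmt_13 {V : Type} [Fintype V] (H : SimpleGraph V) (v w : V) (hvw : v ≠ w)
    (htwin : H.neighborSet v = H.neighborSet w) :
    (∀ B : Set V, IsBiclique H B → w ∈ B → v ∈ B) ∧
    Set.BijOn (fun B : Set V => (Subtype.val ⁻¹' (B \ {w}) : Set ({w}ᶜ : Set V)))
      {B : Set V | IsBiclique H B}
      {T : Set ({w}ᶜ : Set V) | IsBiclique (SimpleGraph.induce ({w}ᶜ : Set V) H) T} ∧
    Nonempty (KB (SimpleGraph.induce ({w}ᶜ : Set V) H) ≃g KB H) := by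
  have hA : ∀ a, H.Adj a v ↔ H.Adj a w := by
    intro a
    constructor
    · intro h
      exact ((htwin ▸ (H.mem_neighborSet v a).mpr h.symm : a ∈ H.neighborSet w)).symm
    · intro h
      exact ((htwin.symm ▸ (H.mem_neighborSet w a).mpr h.symm : a ∈ H.neighborSet v)).symm
  have hA' : ∀ a, H.Adj a w ↔ H.Adj a v := fun a => (hA a).symm
  have hclaim1 : ∀ B : Set V, IsBiclique H B → w ∈ B → v ∈ B :=
    fun B hB hw => twin_mem_biclique hA' hB hw
  have hfun : ∀ B : Set V,
      (Subtype.val ⁻¹' (B \ {w}) : Set ({w}ᶜ : Set V)) = Subtype.val ⁻¹' B := by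
    intro B
    ext a
    have : a.1 ≠ w := a.2
    simp [Set.mem_preimage, Set.mem_diff, this]
  refine ⟨hclaim1, ?_, ?_⟩
  · refine ⟨?_, ?_, ?_⟩
    · intro B hB
      show IsBiclique _ _
      simp only [hfun]
      exact biclique_preimage hvw hA hB
    · intro B hB B' hB' h
      simp only [hfun] at h
      exact biclique_preimage_inj hB hB' h
    · intro T hT
      obtain ⟨B, hB, hBT⟩ := biclique_preimage_surj hvw hA hT
      exact ⟨B, hB, by simp only [hfun]; exact hBT⟩
  · -- the graph isomorphism
    set H' := SimpleGraph.induce ({w}ᶜ : Set V) H with hH'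
    let g : {B : Set V // IsBiclique H B} → {T : Set ({w}ᶜ : Set V) // IsBiclique H' T} :=
      fun B => ⟨Subtype.val ⁻¹' B.1, biclique_preimage hvw hA B.2⟩
    have hginj : Function.Injective g := by
      intro B B' h
      exact Subtype.ext (biclique_preimage_inj B.2 B'.2 (congrArg Subtype.val h))
    have hgsurj : Function.Surjective g := by
      intro T
      obtain ⟨B, hB, hBT⟩ := biclique_preimage_surj hvw hA T.2
      exact ⟨⟨B, hB⟩, Subtype.ext hBT⟩
    let e : {B : Set V // IsBiclique H B} ≃ {T : Set ({w}ᶜ : Set V) // IsBiclique H' T} :=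
      Equiv.ofBijective g ⟨hginj, hgsurj⟩
    have hadj : ∀ A B : {B : Set V // IsBiclique H B},
        (KB H').Adj (e A) (e B) ↔ (KB H).Adj A B := by
      intro A B
      rw [KB, KB, SimpleGraph.fromRel_adj, SimpleGraph.fromRel_adj]
      have hne : e A ≠ e B ↔ A ≠ B := not_congr ⟨fun h => e.injective h, fun h => h ▸ rfl⟩
      have hint : ∀ X Y : {B : Set V // IsBiclique H B},
          (((e X).1 : Set ({w}ᶜ : Set V)) ∩ (e Y).1).Nonempty ↔ (X.1 ∩ Y.1).Nonempty := by
        intro X Y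
        constructor
        · rintro ⟨a, ha1, ha2⟩
          exact ⟨a.1, ha1, ha2⟩
        · rintro ⟨x, hx1, hx2⟩
          by_cases hxw : x = w
          · subst hxw
            have hv1 : v ∈ X.1 := hclaim1 _ X.2 hx1
            have hv2 : v ∈ Y.1 := hclaim1 _ Y.2 hx2
            exact ⟨⟨v, hvw⟩, hv1, hv2⟩
          · exact ⟨⟨x, hxw⟩, hx1, hx2⟩
      rw [hne, hint A B, hint B A]
    let iso : KB H ≃g KB H' := { toEquiv := e, map_rel_iff' := @fun A B => hadj A B }
    exact ⟨iso.symm⟩
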